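/- Let p be a prime, n a positive integer with n ≤ p, and set r = min(n+1, p) (that is, r = n+1 if n < p and r = p if n = p). Then (x^p − x)^r is a null polynomial on the ring of dual numbers ℤ_{p^n}[α], and it is a monic null polynomial of minimal degree: no monic polynomial in ℤ_{p^n}[α][x] of degree less than rp is a null polynomial on ℤ_{p^n}[α]. -/
import Mathlib

open Polynomial

namespace MonicNullPolyAux
open Finset


noncomputable def dd (q : Polynomial ℤ) : Polynomial ℤ := taylor 1 q - q

lemma dd_eval (q : Polynomial ℤ) (m : ℤ) : (dd q).eval m = q.eval (m + 1) - q.eval m := by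
  simp [dd, taylor_eval]

lemma dd_add (q₁ q₂ : Polynomial ℤ) : dd (q₁ + q₂) = dd q₁ + dd q₂ := by
  simp only [dd, map_add]; ring

lemma dd_iter_dvd (d : ℤ) (k : ℕ) (q : Polynomial ℤ) (h : ∀ m, d ∣ q.eval m) :
    ∀ m, d ∣ (dd^[k] q).eval m := by
  induction k generalizing q with
  | zero => simpa using h
  | succ k ih =>
      rw [Function.iterate_succ_apply]
      exact ih _ (fun m => by rw [dd_eval]; exact dvd_sub (h _) (h _))

lemma dd_coeff (q : Polynomial ℤ) (m : ℕ) (h : q.natDegree ≤ m + 1) :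
    (dd q).coeff m = (m + 1 : ℤ) * q.coeff (m + 1) := by
  have hd : (hasseDeriv m q).natDegree ≤ 1 := by
    refine (natDegree_hasseDeriv_le q m).trans ?_
    omega
  have he : (hasseDeriv m q).eval 1 = (hasseDeriv m q).coeff 0 + (hasseDeriv m q).coeff 1 := by
    rw [eval_eq_sum_range' (lt_of_le_of_lt hd (by norm_num : (1:ℕ) < 2))]
    simp [Finset.sum_range_succ]
  have h0 : (hasseDeriv m q).coeff 0 = q.coeff m := by
    rw [hasseDeriv_coeff]; simp
  have h1 : (hasseDeriv m q).coeff 1 = ((1 + m).choose m : ℤ) * q.coeff (1 + m) := by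
    rw [hasseDeriv_coeff]
  have hc : ((1 + m).choose m : ℤ) = (m + 1 : ℤ) := by
    rw [add_comm 1 m]
    rw [Nat.choose_succ_self_right]
    push_cast; ring
  simp only [dd, coeff_sub, taylor_coeff, he, h0, h1]
  rw [hc, add_comm 1 m]
  ring

lemma natDegree_dd_le (q : Polynomial ℤ) (k : ℕ) (h : q.natDegree ≤ k + 1) :
    (dd q).natDegree ≤ k := by
  rw [natDegree_le_iff_coeff_eq_zero]
  intro m hm
  rw [dd_coeff q m (h.trans (by omega))]
  rw [coeff_eq_zero_of_natDegree_lt (by omega)]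
  ring

lemma dd_iter_eq_C (k : ℕ) : ∀ q : Polynomial ℤ, q.natDegree ≤ k →
    dd^[k] q = C ((k.factorial : ℤ) * q.coeff k) := by
  induction k with
  | zero =>
      intro q hq
      rw [Function.iterate_zero_apply, eq_C_of_natDegree_le_zero hq]
      simp
  | succ k ih =>
      intro q hq
      rw [Function.iterate_succ_apply, ih _ (natDegree_dd_le q k hq),
        dd_coeff q k hq]
      congr 1
      push_cast [Nat.factorial_succ]
      ring


lemma claim1 (p n : ℕ) (hp : p.Prime) (hnp : n ≤ p) (F : Polynomial ℤ)
    (hF : ∀ m : ℤ, (p : ℤ) ^ n ∣ F.eval m) (a : ℤ) :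
    ∀ k, (p : ℤ) ^ (n - k) ∣ (hasseDeriv k F).eval a := by
  suffices H : ∀ M k : ℕ, n ≤ k + M → (p : ℤ) ^ (n - k) ∣ (hasseDeriv k F).eval a by
    intro k; exact H n k (by omega)
  intro M
  induction M with
  | zero => intro k hk; rw [Nat.sub_eq_zero_of_le (by omega)]; simp
  | succ M ih =>
      intro k hk
      by_cases hkM : n ≤ k + M
      · exact ih k hkM
      have hkn : k + M + 1 = n := by omega
      have hklt : k < n := by omega
      set N := F.natDegree with hN
      set T : ℕ → ℤ := fun j => (hasseDeriv j F).eval a with hT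
      by_cases hNk : N < k
      · have : (taylor a F).coeff k = 0 :=
          coeff_eq_zero_of_natDegree_lt (by rwa [natDegree_taylor])
        rw [taylor_coeff] at this
        rw [this]
        exact dvd_zero _
      push_neg at hNk
      -- the two pieces
      set h₁ : Polynomial ℤ := ∑ j ∈ Finset.range (k + 1), C (T j * p ^ j) * X ^ j with hh₁
      set h₂ : Polynomial ℤ := ∑ j ∈ Finset.Ico (k + 1) (N + 1), C (T j * p ^ j) * X ^ j with hh₂
      -- evaluation identity
      have hsplit : ∀ m : ℤ, h₁.eval m + h₂.eval m = F.eval (a + p * m) := by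
        intro m
        have h1 : F.eval (a + p * m) = (taylor a F).eval ((p : ℤ) * m) := by
          rw [taylor_eval]; ring_nf
        rw [h1, eval_eq_sum_range' (n := N + 1)
          (by rw [natDegree_taylor]; omega) ((p : ℤ) * m)]
        have h2 : ∀ j : ℕ, (taylor a F).coeff j * ((p : ℤ) * m) ^ j
            = (C (T j * p ^ j) * X ^ j).eval m := by
          intro j
          rw [taylor_coeff]
          simp [hT, mul_pow]
          ring
        rw [Finset.sum_congr rfl (fun j _ => h2 j)]
        rw [Finset.range_eq_Ico, ← Finset.sum_Ico_consecutive _ (by omega : 0 ≤ k + 1)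
          (by omega : k + 1 ≤ N + 1)]
        rw [hh₁, hh₂, eval_finset_sum, eval_finset_sum, Finset.range_eq_Ico]
      -- h₂ has all values divisible by p^n
      have hh2dvd : ∀ m : ℤ, (p : ℤ) ^ n ∣ h₂.eval m := by
        intro m
        rw [hh₂, eval_finset_sum]
        refine Finset.dvd_sum ?_
        intro j hj
        rw [Finset.mem_Ico] at hj
        have hjk : k + 1 ≤ j := hj.1
        simp only [eval_mul, eval_C, eval_pow, eval_X]
        by_cases hjn : j ≤ n
        · have : (p : ℤ) ^ (n - j) ∣ T j := ih j (by omega)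
          obtain ⟨c, hc⟩ := this
          refine Dvd.intro (c * m ^ j) ?_
          rw [hc]
          rw [← pow_sub_mul_pow (p : ℤ) hjn]
          ring
        · obtain ⟨c, hc⟩ : (p : ℤ) ^ n ∣ (p : ℤ) ^ j := pow_dvd_pow _ (by omega)
          exact Dvd.intro (T j * c * m ^ j) (by rw [hc]; ring)
      -- h₁ has all values divisible by p^n
      have hh1dvd : ∀ m : ℤ, (p : ℤ) ^ n ∣ h₁.eval m := by
        intro m
        have := hsplit m
        have h3 : h₁.eval m = F.eval (a + p * m) - h₂.eval m := by omega
        rw [h3]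
        exact dvd_sub (hF _) (hh2dvd m)
      -- degree of h₁
      have hdeg : h₁.natDegree ≤ k := by
        refine natDegree_sum_le_of_forall_le _ _ ?_
        intro j hj
        rw [Finset.mem_range] at hj
        exact (natDegree_C_mul_X_pow_le _ _).trans (by omega)
      -- coefficient k of h₁
      have hcoeff : h₁.coeff k = T k * p ^ k := by
        rw [hh₁, finset_sum_coeff]
        rw [Finset.sum_eq_single k]
        · rw [coeff_C_mul, coeff_X_pow, if_pos rfl, mul_one]
        · intro j _ hjk
          rw [coeff_C_mul, coeff_X_pow, if_neg (Ne.symm hjk), mul_zero]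
        · intro h; exact absurd (Finset.self_mem_range_succ k) h
      -- conclude
      have hfinal : (p : ℤ) ^ n ∣ (k.factorial : ℤ) * (T k * p ^ k) := by
        have := dd_iter_dvd ((p : ℤ) ^ n) k h₁ hh1dvd 0
        rwa [dd_iter_eq_C k h₁ hdeg, eval_C, hcoeff] at this
      have hcop : IsCoprime ((p : ℤ) ^ n) (k.factorial : ℤ) := by
        have : Nat.Coprime p (k.factorial) :=
          (Nat.Prime.coprime_iff_not_dvd hp).2
            (fun hd => by have := (Nat.Prime.dvd_factorial hp).1 hd; omega)
        rw [Int.isCoprime_iff_gcd_eq_one, ← Nat.cast_pow, Int.gcd_natCast_natCast]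
        exact Nat.Coprime.pow_left n this
      have h4 : (p : ℤ) ^ n ∣ T k * p ^ k := hcop.dvd_of_dvd_mul_left hfinal
      have h5 : (p : ℤ) ^ (n - k) * (p : ℤ) ^ k ∣ T k * (p : ℤ) ^ k := by
        rwa [← pow_add, Nat.sub_add_cancel (by omega)]
      exact (mul_dvd_mul_iff_right (pow_ne_zero k (by exact_mod_cast hp.ne_zero))).1 h5


lemma claim2 (p n r : ℕ) (hp : p.Prime) (hn : 0 < n) (hnp : n ≤ p)
    (hr : r = min (n + 1) p) (F : Polynomial ℤ)
    (hF : ∀ m : ℤ, (p : ℤ) ^ n ∣ F.eval m)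
    (hF' : ∀ m : ℤ, (p : ℤ) ^ n ∣ (derivative F).eval m) :
    ∀ k < r, ∀ a : ℤ, (p : ℤ) ∣ (hasseDeriv k F).eval a := by
  intro k hk a
  rcases lt_or_ge k n with hkn | hkn
  · exact (dvd_pow_self (p : ℤ) (show n - k ≠ 0 by omega)).trans
      (claim1 p n hp hnp F hF a k)
  · -- k = n and n < p
    have hnp' : n < p := by omega
    rw [show k = n by omega]
    have h1 : (p : ℤ) ^ (n - (n - 1)) ∣ (hasseDeriv (n - 1) (derivative F)).eval a :=
      claim1 p n hp hnp (derivative F) hF' a (n - 1)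
    have h2 : n - (n - 1) = 1 := by omega
    rw [h2, pow_one] at h1
    have e1 : n - 1 + 1 = n := by omega
    have e2 : n.choose (n - 1) = n := by
      rw [← Nat.choose_symm (by omega : n - 1 ≤ n), show n - (n - 1) = 1 by omega,
        Nat.choose_one_right]
    have h3 : hasseDeriv (n - 1) (derivative F) = n.choose (n - 1) • hasseDeriv n F := by
      rw [← hasseDeriv_one, ← LinearMap.comp_apply, hasseDeriv_comp (n - 1) 1]
      simp [e1]
    rw [h3] at h1
    have h4 : (n.choose (n - 1) • hasseDeriv n F).eval a
        = (n : ℤ) * (hasseDeriv n F).eval a := by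
      simp [e2, nsmul_eq_mul]
    rw [h4] at h1
    have hcop : IsCoprime (p : ℤ) (n : ℤ) := by
      rw [Int.isCoprime_iff_gcd_eq_one, Int.gcd_natCast_natCast]
      exact (Nat.Prime.coprime_iff_not_dvd hp).2 (fun hd => by
        have := Nat.le_of_dvd hn hd; omega)
    exact hcop.dvd_of_dvd_mul_left h1

lemma part2_int (p n r : ℕ) (hp : p.Prime) (hn : 0 < n) (hnp : n ≤ p)
    (hr : r = min (n + 1) p) (F : Polynomial ℤ) (hmon : F.Monic)
    (hdeg : F.natDegree < r * p)
    (hF : ∀ m : ℤ, (p : ℤ) ^ n ∣ F.eval m)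
    (hF' : ∀ m : ℤ, (p : ℤ) ^ n ∣ (derivative F).eval m) : False := by
  haveI : Fact p.Prime := ⟨hp⟩
  set Fb : Polynomial (ZMod p) := F.map (Int.castRingHom (ZMod p)) with hFb
  have hFbmon : Fb.Monic := hmon.map _
  have hFbne : Fb ≠ 0 := hFbmon.ne_zero
  have hFbdeg : Fb.natDegree = F.natDegree := hmon.natDegree_map _
  -- each a : ZMod p has root multiplicity ≥ r
  have hmult : ∀ a : ZMod p, r ≤ rootMultiplicity a Fb := by
    intro a
    obtain ⟨a', rfl⟩ := ZMod.intCast_surjective a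
    rw [le_rootMultiplicity_iff hFbne]
    -- first: X ^ r ∣ taylor a Fb
    have hXdvd : X ^ r ∣ taylor ((a' : ℤ) : ZMod p) Fb := by
      rw [X_pow_dvd_iff]
      intro d hd
      rw [taylor_coeff]
      have hmap : hasseDeriv d Fb = (hasseDeriv d F).map (Int.castRingHom (ZMod p)) := by
        ext m
        simp only [hFb, hasseDeriv_coeff, coeff_map, eq_intCast]
        push_cast
        ring
      rw [hmap, eval_map, eval₂_at_intCast, Int.cast_id]
      have := claim2 p n r hp hn hnp hr F hF hF' d hd a'
      show (((hasseDeriv d F).eval a' : ℤ) : ZMod p) = 0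
      rw [ZMod.intCast_zmod_eq_zero_iff_dvd]
      exact_mod_cast this
    obtain ⟨c, hc⟩ := hXdvd
    refine ⟨c.comp (X - C ((a' : ℤ) : ZMod p)), ?_⟩
    have := congrArg (fun q => q.comp (X - C ((a' : ℤ) : ZMod p))) hc
    simp only [mul_comp, pow_comp, X_comp] at this
    rw [taylor_apply, comp_assoc] at this
    simpa using this
  -- count roots
  have hcount : ∀ a : ZMod p, r ≤ Fb.roots.count a := by
    intro a; rw [count_roots]; exact hmult a
  have hsum : (∑ a : ZMod p, Fb.roots.count a) = Multiset.card Fb.roots := by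
    rw [← Multiset.toFinset_sum_count_eq]
    exact (Finset.sum_subset (Finset.subset_univ _) (fun x _ hx => by
      simp [Multiset.count_eq_zero.2 (fun h => hx (Multiset.mem_toFinset.2 h))])).symm
  have hge : r * p ≤ Multiset.card Fb.roots := by
    rw [← hsum]
    calc r * p = ∑ _a : ZMod p, r := by
          rw [Finset.sum_const, Finset.card_univ, ZMod.card, smul_eq_mul, mul_comm]
      _ ≤ ∑ a : ZMod p, Fb.roots.count a := Finset.sum_le_sum (fun a _ => hcount a)
  have := (Polynomial.card_roots' Fb).trans_lt (by rw [hFbdeg]; exact hdeg)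
  omega



lemma pow_min_dvd (p n r : ℕ) (hp : p.Prime) (hn : 0 < n) (hnp : n ≤ p)
    (hr : r = min (n + 1) p) : (p : ℤ) ^ n ∣ (r : ℤ) * (p : ℤ) ^ (r - 1) := by
  rcases le_or_gt (n + 1) p with h | h
  · have : r = n + 1 := by omega
    subst this
    simp only [Nat.add_sub_cancel]
    exact Dvd.intro_left _ rfl
  · have hrp : r = p := by omega
    have h1 : (p : ℤ) ^ n = (p : ℤ) * (p : ℤ) ^ (r - 1) := by
      rw [show n = r by omega]
      conv_lhs => rw [show r = 1 + (r - 1) by omega]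
      rw [pow_add, pow_one]
    rw [h1, show ((r : ℕ) : ℤ) = ((p : ℕ) : ℤ) by exact_mod_cast congrArg Nat.cast hrp]

lemma part1 (p n r : ℕ) (hp : p.Prime) (hn : 0 < n) (hnp : n ≤ p)
    (hr : r = min (n + 1) p) (z : DualNumber (ZMod (p ^ n))) :
    eval z (((X : Polynomial (DualNumber (ZMod (p ^ n)))) ^ p - X) ^ r) = 0 := by
  haveI : Fact p.Prime := ⟨hp⟩
  have hnr : n ≤ r := by omega
  have heval : eval z (((X : Polynomial (DualNumber (ZMod (p ^ n)))) ^ p - X) ^ r)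
      = (z ^ p - z) ^ r := by simp
  rw [heval]
  set w := z ^ p - z with hw
  obtain ⟨m, hm⟩ := ZMod.intCast_surjective (n := p ^ n) (TrivSqZeroExt.fst z)
  have hfermat : (p : ℤ) ∣ m ^ p - m := by
    have h0 : ((m ^ p - m : ℤ) : ZMod p) = 0 := by
      push_cast
      rw [ZMod.pow_card]
      ring
    exact_mod_cast (ZMod.intCast_zmod_eq_zero_iff_dvd _ _).1 h0
  obtain ⟨t, ht⟩ := hfermat
  have hfst : TrivSqZeroExt.fst w = ((p * t : ℤ) : ZMod (p ^ n)) := by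
    rw [hw, TrivSqZeroExt.fst_sub, TrivSqZeroExt.fst_pow, ← hm, ← ht]
    push_cast
    ring
  refine TrivSqZeroExt.ext ?_ ?_
  · rw [TrivSqZeroExt.fst_pow, hfst, TrivSqZeroExt.fst_zero, ← Int.cast_pow,
      ZMod.intCast_zmod_eq_zero_iff_dvd]
    push_cast
    rw [mul_pow]
    exact Dvd.dvd.mul_right (pow_dvd_pow (p : ℤ) hnr) _
  · rw [TrivSqZeroExt.snd_pow, TrivSqZeroExt.snd_zero, hfst]
    have : ((p * t : ℤ) : ZMod (p ^ n)) ^ r.pred = (((p * t : ℤ)) ^ (r - 1) : ℤ) := by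
      rw [Nat.pred_eq_sub_one, Int.cast_pow]
    rw [this, smul_eq_mul]
    have hz : (r : ZMod (p ^ n)) * (((p * t : ℤ) ^ (r - 1) : ℤ) : ZMod (p ^ n)) = 0 := by
      have : (r : ZMod (p ^ n)) = ((r : ℤ) : ZMod (p ^ n)) := by push_cast; rfl
      rw [this, ← Int.cast_mul, ZMod.intCast_zmod_eq_zero_iff_dvd]
      push_cast
      rw [mul_pow, ← mul_assoc]
      exact Dvd.dvd.mul_right (pow_min_dvd p n r hp hn hnp hr) _
    rw [show (r : ℕ) • ((((p * t : ℤ) ^ (r - 1) : ℤ) : ZMod (p ^ n)) * TrivSqZeroExt.snd w)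
        = (r : ZMod (p ^ n)) * ((((p * t : ℤ) ^ (r - 1) : ℤ) : ZMod (p ^ n)) * TrivSqZeroExt.snd w)
      from by rw [nsmul_eq_mul], ← mul_assoc, hz, zero_mul]



/-- `fst` as a ring hom on dual numbers. -/
def fstRH (R : Type*) [CommRing R] : DualNumber R →+* R where
  toFun := TrivSqZeroExt.fst
  map_one' := rfl
  map_mul' := fun _ _ => rfl
  map_zero' := rfl
  map_add' := fun _ _ => rfl

@[simp] lemma fstRH_apply (R : Type*) [CommRing R] (x : DualNumber R) :
    fstRH R x = TrivSqZeroExt.fst x := rfl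

theorem main_thm (p n : ℕ) (hp : p.Prime) (hn : 0 < n)
    (hnp : n ≤ p) (r : ℕ) (hr : r = min (n + 1) p) :
    (∀ z : DualNumber (ZMod (p ^ n)),
        eval z (((X : Polynomial (DualNumber (ZMod (p ^ n)))) ^ p - X) ^ r) = 0) ∧
      ∀ g : Polynomial (DualNumber (ZMod (p ^ n))), g.Monic →
        g.degree < (r * p : ℕ) → ∃ z : DualNumber (ZMod (p ^ n)), eval z g ≠ 0 := by
  haveI : Fact p.Prime := ⟨hp⟩
  haveI : Fact (1 < p ^ n) := ⟨Nat.one_lt_pow (by omega) hp.one_lt⟩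
  constructor
  · exact part1 p n r hp hn hnp hr
  intro g hmon hdeg
  by_contra hne
  push_neg at hne
  set R := ZMod (p ^ n) with hR
  -- the first-component polynomial
  set g0 : Polynomial R := g.map (fstRH R) with hg0
  have hg0mon : g0.Monic := hmon.map _
  have hnull : ∀ a : R, g0.eval a = 0 := by
    intro a
    have h1 : g0.eval (fstRH R (TrivSqZeroExt.inl a)) = fstRH R (eval (TrivSqZeroExt.inl a) g) := by
      rw [hg0, eval_map, eval₂_at_apply]
    rw [hne, map_zero] at h1
    simpa using h1
  have hdnull : ∀ a : R, (derivative g0).eval a = 0 := by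
    intro a
    have h2 := eval_add_of_sq_eq_zero g (TrivSqZeroExt.inl a) DualNumber.eps
      (by rw [sq, DualNumber.eps_mul_eps])
    rw [hne, hne, zero_add] at h2
    have h3 : TrivSqZeroExt.fst ((derivative g).eval (TrivSqZeroExt.inl a)) = 0 := by
      have h4 := congrArg TrivSqZeroExt.snd h2.symm
      rwa [TrivSqZeroExt.snd_mul, TrivSqZeroExt.snd_zero, DualNumber.snd_eps,
        DualNumber.fst_eps, MulOpposite.op_zero, zero_smul, add_zero, smul_eq_mul,
        mul_one] at h4
    have h5 : (derivative g0).eval (fstRH R (TrivSqZeroExt.inl a))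
        = fstRH R ((derivative g).eval (TrivSqZeroExt.inl a)) := by
      rw [hg0, derivative_map, eval_map, eval₂_at_apply]
    have h3' : fstRH R ((derivative g).eval (TrivSqZeroExt.inl a)) = 0 := h3
    rw [h3'] at h5
    simpa using h5
  -- lift to ℤ
  have hlift : g0 ∈ lifts (Int.castRingHom R) := by
    rw [lifts_iff_coeff_lifts]
    intro k
    obtain ⟨m, hm⟩ := ZMod.intCast_surjective (n := p ^ n) (g0.coeff k)
    exact ⟨m, by simpa using hm⟩
  obtain ⟨F, hFmap, hFdeg, hFmon⟩ := lifts_and_natDegree_eq_and_monic hlift hg0mon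
  have hFnull : ∀ m : ℤ, (p : ℤ) ^ n ∣ F.eval m := by
    intro m
    have h1 : ((F.eval m : ℤ) : R) = g0.eval ((m : ℤ) : R) := by
      rw [← hFmap, eval_map, eval₂_at_intCast, Int.cast_id]
      rfl
    rw [hnull] at h1
    have := (ZMod.intCast_zmod_eq_zero_iff_dvd _ _).1 h1
    exact_mod_cast this
  have hFdnull : ∀ m : ℤ, (p : ℤ) ^ n ∣ (derivative F).eval m := by
    intro m
    have h1 : (((derivative F).eval m : ℤ) : R) = (derivative g0).eval ((m : ℤ) : R) := by
      rw [← hFmap, derivative_map, eval_map, eval₂_at_intCast, Int.cast_id]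
      rfl
    rw [hdnull] at h1
    have := (ZMod.intCast_zmod_eq_zero_iff_dvd _ _).1 h1
    exact_mod_cast this
  -- degree bound
  have hgne : g ≠ 0 := hmon.ne_zero
  have hdeg' : g.natDegree < r * p := by
    rwa [← natDegree_lt_iff_degree_lt hgne] at hdeg
  have hdegF : F.natDegree < r * p := by
    rw [hFdeg, hg0, hmon.natDegree_map]
    exact hdeg'
  exact part2_int p n r hp hn hnp hr F hFmon hdegF hFnull hFdnull

end MonicNullPolyAux

/-- **Corollary (minimal monic null polynomial on ℤ_{p^n}[α]).**
Let `p` be a prime, `n ≤ p` a positive integer and `r = min(n+1, p)`.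
Then `(x^p - x)^r` is a null polynomial on `ℤ_{p^n}[α]`, and it is a monic
null polynomial of minimal degree: no monic polynomial over `ℤ_{p^n}[α]` of
degree less than `r·p` is a null polynomial on `ℤ_{p^n}[α]`. -/
theorem monic_null_poly_minimal_degree (p n : ℕ) (hp : p.Prime) (hn : 0 < n)
    (hnp : n ≤ p) (r : ℕ) (hr : r = min (n + 1) p) :
    (∀ z : DualNumber (ZMod (p ^ n)),
        eval z (((X : Polynomial (DualNumber (ZMod (p ^ n)))) ^ p - X) ^ r) = 0) ∧
      ∀ g : Polynomial (DualNumber (ZMod (p ^ n))), g.Monic →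
        g.degree < (r * p : ℕ) → ∃ z : DualNumber (ZMod (p ^ n)), eval z g ≠ 0 :=
  MonicNullPolyAux.main_thm p n hp hn hnp r hr
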